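/- Let n ≥ 1, ε > 0, and let π₁, …, π_{n+1} : ℝ → ℝ be functions (e.g. residual networks with scalar input and output). Let Ã ∈ ℝ^{(n+1)×(n+1)} be the upper shift matrix (Ã_{i,i+1} = 1, all other entries 0). Suppose P ∈ ℝ^{(n+1)×(n+1)} is symmetric positive definite with smallest eigenvalue λ₁ and largest eigenvalue λ₂, and suppose λ₃ > 0 is such that for all η ∈ ℝ^{n+1}, writing 𝛑(η₁) = (π₁(η₁), …, π_{n+1}(η₁)) ∈ ℝ^{n+1}: ηᵀ(ÃᵀP + PÃ)η − 2 ηᵀP𝛑(η₁) ≤ −λ₃ ‖η‖₂². Let h : [0,∞) → ℝ satisfy |h(t)| ≤ M₀ for all t ≥ 0, and let η : [0,∞) → ℝ^{n+1} be differentiable with ε η̇_i(t) = η_{i+1}(t) − π_i(η₁(t)) for i = 1, …, n and ε η̇_{n+1}(t) = −π_{n+1}(η₁(t)) + ε h(t). Then, with V₀(η) = ηᵀPη and M₁ = 2ελ₂²M₀/(λ₃√λ₁), for all t ≥ 0: √(V₀(η(t))) ≤ (√(V₀(η(0))) − M₁) e^{−λ₃ t/(2ελ₂)} + M₁. -/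

import Mathlib

open Matrix

/-- the Euclidean norm `‖v‖₂` of a finitely indexed real vector. -/
noncomputable def norm2 {I : Type*} [Fintype I] (v : I → ℝ) : ℝ := Real.sqrt (∑ i, v i ^ 2)

/-- the `(n+1) × (n+1)` upper shift matrix `Ã`. -/
def shiftMat (n : ℕ) : Matrix (Fin (n + 1)) (Fin (n + 1)) ℝ :=
  Matrix.of fun i j => if (i : ℕ) + 1 = (j : ℕ) then 1 else 0

/-- Linear Gronwall inequality: if `u' ≤ -k u + b` on `[0,∞)` with `k > 0`, then
`u t ≤ (u 0 - b/k) e^{-kt} + b/k`. -/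
lemma gronwall_aux {u u' : ℝ → ℝ} {k b : ℝ} (hk : 0 < k)
    (hu : ∀ t, 0 ≤ t → HasDerivAt u (u' t) t)
    (hb : ∀ t, 0 ≤ t → u' t ≤ -k * u t + b) :
    ∀ t, 0 ≤ t → u t ≤ (u 0 - b / k) * Real.exp (-(k * t)) + b / k := by
  set g : ℝ → ℝ := fun s => (u s - b / k) * Real.exp (k * s) with hg
  have hexp : ∀ s : ℝ, HasDerivAt (fun s => Real.exp (k * s)) (Real.exp (k * s) * k) s := by
    intro s
    simpa using ((hasDerivAt_id s).const_mul k).exp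
  have hgd : ∀ s, 0 ≤ s → HasDerivAt g
      (u' s * Real.exp (k * s) + (u s - b / k) * (Real.exp (k * s) * k)) s := by
    intro s hs
    exact ((hu s hs).sub_const _).mul (hexp s)
  have hanti : AntitoneOn g (Set.Ici 0) := by
    apply antitoneOn_of_deriv_nonpos (convex_Ici 0)
    · exact fun s hs => ((hgd s hs).continuousAt).continuousWithinAt
    · intro s hs
      rw [interior_Ici] at hs
      exact ((hgd s (le_of_lt hs)).differentiableAt).differentiableWithinAt
    · intro s hs
      rw [interior_Ici] at hs
      rw [(hgd s hs.le).deriv]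
      have h1 := hb s hs.le
      have h2 : (0:ℝ) < Real.exp (k * s) := Real.exp_pos _
      have hbk : b / k * k = b := div_mul_cancel₀ b (ne_of_gt hk)
      nlinarith [mul_le_mul_of_nonneg_right h1 h2.le]
  intro t ht
  have h0 : g t ≤ g 0 := hanti (Set.mem_Ici.mpr le_rfl) ht ht
  have hgt : g 0 = u 0 - b / k := by simp [hg]
  have h2 : (0:ℝ) < Real.exp (k * t) := Real.exp_pos _
  rw [hgt] at h0
  have h3 : u t - b / k ≤ (u 0 - b / k) * Real.exp (-(k * t)) := by
    rw [Real.exp_neg, ← div_eq_mul_inv]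
    rw [le_div_iff₀ h2]
    exact h0
  linarith

/-- Square-root Gronwall: if `V ≥ 0`, `V' ≤ -2k V + 2c √V` on `[0,∞)`, then
`√(V t) ≤ (√(V 0) - c/k) e^{-kt} + c/k`. -/
lemma sqrt_gronwall {V V' : ℝ → ℝ} {k c : ℝ} (hk : 0 < k) (hc : 0 ≤ c)
    (hV0 : ∀ t, 0 ≤ t → 0 ≤ V t)
    (hd : ∀ t, 0 ≤ t → HasDerivAt V (V' t) t)
    (hb : ∀ t, 0 ≤ t → V' t ≤ -(2 * k) * V t + 2 * c * Real.sqrt (V t)) :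
    ∀ t, 0 ≤ t → Real.sqrt (V t) ≤ (Real.sqrt (V 0) - c / k) * Real.exp (-(k * t)) + c / k := by
  intro t ht
  have main : ∀ δ : ℝ, 0 < δ →
      Real.sqrt (V t) ≤ (Real.sqrt (V 0 + δ ^ 2) - (c + k * δ) / k) * Real.exp (-(k * t))
        + (c + k * δ) / k := by
    intro δ hδ
    set W : ℝ → ℝ := fun s => Real.sqrt (V s + δ ^ 2) with hW
    have hWpos : ∀ s, 0 ≤ s → 0 < W s := by
      intro s hs
      have := hV0 s hs
      apply Real.sqrt_pos.mpr
      nlinarith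
    have hWd : ∀ s, 0 ≤ s → HasDerivAt W (V' s / (2 * W s)) s := by
      intro s hs
      exact ((hd s hs).add_const _).sqrt (by nlinarith [hV0 s hs])
    have hWb : ∀ s, 0 ≤ s → V' s / (2 * W s) ≤ -k * W s + (c + k * δ) := by
      intro s hs
      have hw := hWpos s hs
      have hsq : W s ^ 2 = V s + δ ^ 2 := Real.sq_sqrt (by nlinarith [hV0 s hs])
      have hsv : Real.sqrt (V s) ^ 2 = V s := Real.sq_sqrt (hV0 s hs)
      have hsvn : 0 ≤ Real.sqrt (V s) := Real.sqrt_nonneg _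
      have hVleW : Real.sqrt (V s) ≤ W s := Real.sqrt_le_sqrt (by nlinarith)
      have hδW : δ ≤ W s := by
        have hd2 : δ = Real.sqrt (δ ^ 2) := by rw [Real.sqrt_sq hδ.le]
        rw [hd2]
        exact Real.sqrt_le_sqrt (by nlinarith [hV0 s hs])
      rw [div_le_iff₀ (by positivity)]
      have h1 := hb s hs
      nlinarith [mul_nonneg hc (sub_nonneg.mpr hVleW),
        mul_nonneg (mul_nonneg hk.le hδ.le) (sub_nonneg.mpr hδW)]
    have hgr := gronwall_aux hk hWd hWb t ht
    have hVW : Real.sqrt (V t) ≤ W t := Real.sqrt_le_sqrt (by nlinarith)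
    calc Real.sqrt (V t) ≤ W t := hVW
      _ ≤ (W 0 - (c + k * δ) / k) * Real.exp (-(k * t)) + (c + k * δ) / k := hgr
      _ = (Real.sqrt (V 0 + δ ^ 2) - (c + k * δ) / k) * Real.exp (-(k * t))
            + (c + k * δ) / k := rfl
  have hcont : Filter.Tendsto
      (fun δ : ℝ => (Real.sqrt (V 0 + δ ^ 2) - (c + k * δ) / k) * Real.exp (-(k * t))
        + (c + k * δ) / k) (nhdsWithin 0 (Set.Ioi 0))
      (nhds ((Real.sqrt (V 0) - c / k) * Real.exp (-(k * t)) + c / k)) := by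
    have hC : Continuous (fun δ : ℝ =>
        (Real.sqrt (V 0 + δ ^ 2) - (c + k * δ) / k) * Real.exp (-(k * t))
          + (c + k * δ) / k) := by
      apply Continuous.add
      · apply Continuous.mul _ continuous_const
        apply Continuous.sub
        · exact Real.continuous_sqrt.comp (continuous_const.add (continuous_pow 2))
        · exact (continuous_const.add (continuous_const.mul continuous_id)).div_const k
      · exact (continuous_const.add (continuous_const.mul continuous_id)).div_const k
    have h2 := (hC.tendsto 0).mono_left (nhdsWithin_le_nhds (s := Set.Ioi (0:ℝ)))
    simpa using h2
  exact ge_of_tendsto hcont (Filter.eventually_of_mem self_mem_nhdsWithin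
    (fun δ hδ => main δ hδ))

/-- derivative of the quadratic form along a differentiable curve. -/
lemma deriv_quadratic {n : ℕ} (P : Matrix (Fin (n + 1)) (Fin (n + 1)) ℝ)
    (hBsymm : ∀ x y : Fin (n+1) → ℝ, x ⬝ᵥ P.mulVec y = y ⬝ᵥ P.mulVec x)
    (η D : ℝ → Fin (n + 1) → ℝ) (t : ℝ)
    (hη : ∀ i, HasDerivAt (fun s => η s i) (D t i) t) :
    HasDerivAt (fun s => η s ⬝ᵥ P.mulVec (η s)) (2 * (η t ⬝ᵥ P.mulVec (D t))) t := by
  have h1 : HasDerivAt (fun s => ∑ i, ∑ j, η s i * (P i j * η s j))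
      (∑ i, ∑ j, (D t i * (P i j * η t j) + η t i * (P i j * D t j))) t := by
    apply HasDerivAt.fun_sum
    intro i _
    apply HasDerivAt.fun_sum
    intro j _
    exact (hη i).mul ((hη j).const_mul (P i j))
  have heq : (fun s => ∑ i, ∑ j, η s i * (P i j * η s j))
      = fun s => η s ⬝ᵥ P.mulVec (η s) := by
    funext s
    simp [dotProduct, mulVec, Finset.mul_sum]
  have hval : (∑ i, ∑ j, (D t i * (P i j * η t j) + η t i * (P i j * D t j)))
      = 2 * (η t ⬝ᵥ P.mulVec (D t)) := by
    rw [show (2 : ℝ) * (η t ⬝ᵥ P.mulVec (D t))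
        = D t ⬝ᵥ P.mulVec (η t) + η t ⬝ᵥ P.mulVec (D t) from by rw [hBsymm (D t) (η t)]; ring]
    simp [dotProduct, mulVec, Finset.mul_sum, Finset.sum_add_distrib]
  rw [heq, hval] at h1
  exact h1

/-- Gronwall-type estimate in the proof of Theorem 3: along the scaled error dynamics
`ε η̇_i = η_{i+1} - π_i(η₁)` (`i = 1, …, n`), `ε η̇_{n+1} = -π_{n+1}(η₁) + ε h(t)`,
the Lyapunov function `V₀(η) = ηᵀ P η` satisfies
`√V₀(η(t)) ≤ (√V₀(η(0)) - M₁) e^{-λ₃ t/(2ελ₂)} + M₁` with `M₁ = 2ελ₂²M₀/(λ₃√λ₁)`. -/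
theorem error_system_gronwall_estimate
    {n : ℕ} (hn : 1 ≤ n) (ε : ℝ) (hε : 0 < ε)
    (π : Fin (n + 1) → ℝ → ℝ)
    (P : Matrix (Fin (n + 1)) (Fin (n + 1)) ℝ) (hP : P.PosDef)
    (l1 l2 l3 : ℝ) (hl1 : 0 < l1) (hl3 : 0 < l3)
    (hlow : ∀ η : Fin (n + 1) → ℝ, l1 * norm2 η ^ 2 ≤ η ⬝ᵥ P.mulVec η)
    (hupp : ∀ η : Fin (n + 1) → ℝ, η ⬝ᵥ P.mulVec η ≤ l2 * norm2 η ^ 2)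
    (hquad : ∀ η : Fin (n + 1) → ℝ,
      η ⬝ᵥ ((shiftMat n)ᵀ * P + P * shiftMat n).mulVec η
          - 2 * (η ⬝ᵥ P.mulVec (fun i => π i (η 0)))
        ≤ -l3 * norm2 η ^ 2)
    (M₀ : ℝ) (h : ℝ → ℝ) (hh : ∀ t : ℝ, 0 ≤ t → |h t| ≤ M₀)
    (η : ℝ → Fin (n + 1) → ℝ)
    (hη : ∀ t : ℝ, 0 ≤ t → ∀ i : Fin (n + 1), HasDerivAt (fun s => η s i)
      (if hi : (i : ℕ) < n then ε⁻¹ * (η t ⟨(i : ℕ) + 1, by omega⟩ - π i (η t 0))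
       else ε⁻¹ * (-π i (η t 0) + ε * h t)) t) :
    ∀ t : ℝ, 0 ≤ t →
      Real.sqrt (η t ⬝ᵥ P.mulVec (η t))
        ≤ (Real.sqrt (η 0 ⬝ᵥ P.mulVec (η 0)) - 2 * ε * l2 ^ 2 * M₀ / (l3 * Real.sqrt l1))
              * Real.exp (-(l3 * t) / (2 * ε * l2))
          + 2 * ε * l2 ^ 2 * M₀ / (l3 * Real.sqrt l1) := by
  classical
  -- symmetry facts
  have hsym : ∀ i j, P i j = P j i := by
    intro i j
    have := congrFun (congrFun hP.1 j) i
    simpa [Matrix.conjTranspose_apply] using this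
  have hBsymm : ∀ x y : Fin (n+1) → ℝ, x ⬝ᵥ P.mulVec y = y ⬝ᵥ P.mulVec x := by
    intro x y
    simp only [dotProduct, mulVec, Finset.mul_sum]
    rw [Finset.sum_comm]
    refine Finset.sum_congr rfl fun i _ => Finset.sum_congr rfl fun j _ => ?_
    rw [hsym i j]; ring
  -- the basis vector e
  set e : Fin (n+1) → ℝ := Pi.single (Fin.last n) 1 with hedef
  have hene : e ≠ 0 := by
    intro hc
    have := congrFun hc (Fin.last n)
    simp [hedef] at this
  have hnorme : norm2 e = 1 := by
    unfold norm2
    have h1 : (∑ i : Fin (n+1), e i ^ 2) = 1 := by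
      rw [Finset.sum_eq_single (Fin.last n)]
      · simp [hedef]
      · intro b _ hb; simp [hedef, Pi.single_apply, hb]
      · simp
    rw [h1, Real.sqrt_one]
  have hNn : ∀ v : Fin (n+1) → ℝ, 0 ≤ norm2 v := fun v => Real.sqrt_nonneg _
  have hM0 : 0 ≤ M₀ := le_trans (abs_nonneg _) (hh 0 le_rfl)
  have hVpos : ∀ x : Fin (n+1) → ℝ, 0 ≤ x ⬝ᵥ P.mulVec x := by
    intro x
    have := hP.posSemidef.dotProduct_mulVec_nonneg x
    simpa using this
  have hl2 : 0 < l2 := by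
    have h1 := hlow e
    have h2 := hupp e
    rw [hnorme] at h1 h2
    nlinarith
  -- Cauchy–Schwarz for the bilinear form against e
  have hCS : ∀ x : Fin (n+1) → ℝ, |x ⬝ᵥ P.mulVec e| ≤ l2 * norm2 x := by
    intro x
    have hapos : 0 < e ⬝ᵥ P.mulVec e := by simpa using hP.dotProduct_mulVec_pos hene
    have hsqle : (x ⬝ᵥ P.mulVec e) ^ 2 ≤ (e ⬝ᵥ P.mulVec e) * (x ⬝ᵥ P.mulVec x) := by
      set a := e ⬝ᵥ P.mulVec e with ha
      set b := x ⬝ᵥ P.mulVec e with hb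
      have hz : (0:ℝ) ≤ (a • x - b • e) ⬝ᵥ P.mulVec (a • x - b • e) := hVpos _
      have hexp : (a • x - b • e) ⬝ᵥ P.mulVec (a • x - b • e)
          = a^2 * (x ⬝ᵥ P.mulVec x) - a * b * (x ⬝ᵥ P.mulVec e) - a * b * (e ⬝ᵥ P.mulVec x)
            + b^2 * a := by
        rw [mulVec_sub, mulVec_smul, mulVec_smul, sub_dotProduct, smul_dotProduct,
          smul_dotProduct, dotProduct_sub, dotProduct_sub, dotProduct_smul, dotProduct_smul,
          dotProduct_smul, dotProduct_smul]
        simp only [smul_eq_mul]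
        ring
      rw [hexp, hBsymm e x] at hz
      nlinarith [hz, hapos]
    have h1 : (e ⬝ᵥ P.mulVec e) ≤ l2 := by
      have := hupp e
      rw [hnorme] at this
      nlinarith
    have h3 : (x ⬝ᵥ P.mulVec e)^2 ≤ (l2 * norm2 x)^2 := by
      have h2 := hupp x
      nlinarith [hVpos x, hNn x]
    calc |x ⬝ᵥ P.mulVec e| = Real.sqrt ((x ⬝ᵥ P.mulVec e)^2) := (Real.sqrt_sq_eq_abs _).symm
      _ ≤ Real.sqrt ((l2 * norm2 x)^2) := Real.sqrt_le_sqrt h3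
      _ = l2 * norm2 x := Real.sqrt_sq (mul_nonneg hl2.le (hNn x))
  -- the derivative vector
  set D : ℝ → Fin (n + 1) → ℝ := fun t i =>
    if hi : (i : ℕ) < n then ε⁻¹ * (η t ⟨(i : ℕ) + 1, by omega⟩ - π i (η t 0))
    else ε⁻¹ * (-π i (η t 0) + ε * h t) with hDdef
  have hηD : ∀ t : ℝ, 0 ≤ t → ∀ i, HasDerivAt (fun s => η s i) (D t i) t := hη
  -- shift matrix action
  have hshift1 : ∀ (v : Fin (n+1) → ℝ) (i : Fin (n+1)) (hi : (i:ℕ) < n),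
      ((shiftMat n) *ᵥ v) i = v ⟨(i:ℕ)+1, by omega⟩ := by
    intro v i hi
    simp only [shiftMat, mulVec, dotProduct, Matrix.of_apply]
    rw [Finset.sum_eq_single (⟨(i:ℕ)+1, by omega⟩ : Fin (n+1))]
    · simp
    · intro b _ hb
      have hne : ¬((i:ℕ) + 1 = (b:ℕ)) := by
        intro hc
        exact hb (Fin.ext hc.symm)
      simp [hne]
    · simp
  have hshift2 : ∀ (v : Fin (n+1) → ℝ) (i : Fin (n+1)), ¬ (i:ℕ) < n →
      ((shiftMat n) *ᵥ v) i = 0 := by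
    intro v i hi
    simp only [shiftMat, mulVec, dotProduct, Matrix.of_apply]
    apply Finset.sum_eq_zero
    intro j _
    have hne : ¬((i:ℕ) + 1 = (j:ℕ)) := by
      have := j.isLt
      omega
    simp [hne]
  -- identification of the derivative vector
  have hDeq : ∀ t : ℝ, D t
      = ε⁻¹ • ((shiftMat n) *ᵥ η t - (fun i => π i (η t 0)) + (ε * h t) • e) := by
    intro t
    funext i
    by_cases hi : (i:ℕ) < n
    · have hie : i ≠ Fin.last n := by
        intro hc
        rw [hc] at hi
        simp [Fin.last] at hi
      simp only [hDdef, Pi.smul_apply, Pi.add_apply, Pi.sub_apply, smul_eq_mul, dif_pos hi,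
        hshift1 (η t) i hi, hedef, Pi.single_apply, if_neg hie]
      ring
    · simp only [hDdef, Pi.smul_apply, Pi.add_apply, Pi.sub_apply, smul_eq_mul, dif_neg hi,
        hshift2 (η t) i hi, hedef]
      have hie : i = Fin.last n := by
        apply Fin.ext
        have := i.isLt
        simp only [Fin.last]
        omega
      rw [hie, Pi.single_eq_same]
      ring
  -- quadratic form identity
  have hAA : ∀ v : Fin (n+1) → ℝ,
      v ⬝ᵥ ((shiftMat n)ᵀ * P + P * shiftMat n) *ᵥ v
        = 2 * (v ⬝ᵥ P *ᵥ ((shiftMat n) *ᵥ v)) := by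
    intro v
    rw [add_mulVec, dotProduct_add, ← mulVec_mulVec, ← mulVec_mulVec]
    rw [dotProduct_mulVec v (shiftMat n)ᵀ, vecMul_transpose]
    rw [hBsymm (shiftMat n *ᵥ v) v]
    ring
  -- expansion of the drift term
  have hPDt : ∀ t : ℝ, 2 * (η t ⬝ᵥ P.mulVec (D t))
      = ε⁻¹ * ((η t ⬝ᵥ ((shiftMat n)ᵀ * P + P * shiftMat n) *ᵥ η t)
          - 2 * (η t ⬝ᵥ P.mulVec (fun i => π i (η t 0)))
          + 2 * (ε * h t) * (η t ⬝ᵥ P.mulVec e)) := by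
    intro t
    rw [hDeq t]
    rw [mulVec_smul, dotProduct_smul, mulVec_add, mulVec_sub, mulVec_smul,
      dotProduct_add, dotProduct_sub, dotProduct_smul]
    rw [hAA (η t)]
    simp only [smul_eq_mul]
    ring
  -- constants
  set k : ℝ := l3 / (2 * ε * l2) with hkdef
  set c : ℝ := M₀ * l2 / Real.sqrt l1 with hcdef
  have hL1 : 0 < Real.sqrt l1 := Real.sqrt_pos.mpr hl1
  have hkpos : 0 < k := by positivity
  have hcnn : 0 ≤ c := by positivity
  -- the key differential inequality
  have hbound : ∀ t : ℝ, 0 ≤ t → 2 * (η t ⬝ᵥ P.mulVec (D t))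
      ≤ -(2 * k) * (η t ⬝ᵥ P.mulVec (η t))
        + 2 * c * Real.sqrt (η t ⬝ᵥ P.mulVec (η t)) := by
    intro t ht
    rw [hPDt t]
    have hq := hquad (η t)
    have hhb : 2 * (ε * h t) * (η t ⬝ᵥ P.mulVec e) ≤ 2 * ε * (M₀ * (l2 * norm2 (η t))) := by
      have h1 : h t * (η t ⬝ᵥ P.mulVec e) ≤ M₀ * (l2 * norm2 (η t)) := by
        calc h t * (η t ⬝ᵥ P.mulVec e) ≤ |h t * (η t ⬝ᵥ P.mulVec e)| := le_abs_self _
          _ = |h t| * |η t ⬝ᵥ P.mulVec e| := abs_mul _ _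
          _ ≤ M₀ * (l2 * norm2 (η t)) :=
              mul_le_mul (hh t ht) (hCS (η t)) (abs_nonneg _) hM0
      nlinarith [mul_le_mul_of_nonneg_left h1 (by positivity : (0:ℝ) ≤ 2 * ε)]
    have hstep : (η t ⬝ᵥ ((shiftMat n)ᵀ * P + P * shiftMat n) *ᵥ η t)
        - 2 * (η t ⬝ᵥ P.mulVec (fun i => π i (η t 0)))
        + 2 * (ε * h t) * (η t ⬝ᵥ P.mulVec e)
        ≤ -l3 * norm2 (η t)^2 + 2 * ε * (M₀ * (l2 * norm2 (η t))) := by linarith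
    have hmul := mul_le_mul_of_nonneg_left hstep (by positivity : (0:ℝ) ≤ ε⁻¹)
    have hVle := hupp (η t)
    have hVge := hlow (η t)
    have hS : Real.sqrt (η t ⬝ᵥ P.mulVec (η t)) ^ 2 = η t ⬝ᵥ P.mulVec (η t) :=
      Real.sq_sqrt (hVpos _)
    have hSn : 0 ≤ Real.sqrt (η t ⬝ᵥ P.mulVec (η t)) := Real.sqrt_nonneg _
    have hNle : norm2 (η t) ≤ Real.sqrt (η t ⬝ᵥ P.mulVec (η t)) / Real.sqrt l1 := by
      have h1 : norm2 (η t) = Real.sqrt (norm2 (η t)^2) := (Real.sqrt_sq (hNn _)).symm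
      rw [h1, ← Real.sqrt_div (hVpos _) l1]
      apply Real.sqrt_le_sqrt
      rw [le_div_iff₀ hl1]
      nlinarith
    -- assemble
    have e1 : (l3/(ε*l2)) * (η t ⬝ᵥ P.mulVec (η t)) ≤ (l3/(ε*l2)) * (l2 * norm2 (η t)^2) :=
      mul_le_mul_of_nonneg_left hVle (by positivity)
    have e2 : (l3/(ε*l2)) * (l2 * norm2 (η t)^2) = ε⁻¹ * (l3 * norm2 (η t)^2) := by
      field_simp
    have e3 : ε⁻¹ * (2 * ε * (M₀ * (l2 * norm2 (η t)))) = 2 * (M₀ * l2) * norm2 (η t) := by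
      field_simp
    have e4 : 2 * (M₀ * l2) * norm2 (η t)
        ≤ 2 * (M₀ * l2) * (Real.sqrt (η t ⬝ᵥ P.mulVec (η t)) / Real.sqrt l1) :=
      mul_le_mul_of_nonneg_left hNle (by positivity)
    have e5 : 2 * (M₀ * l2) * (Real.sqrt (η t ⬝ᵥ P.mulVec (η t)) / Real.sqrt l1)
        = 2 * c * Real.sqrt (η t ⬝ᵥ P.mulVec (η t)) := by
      rw [hcdef]
      field_simp
    have e6 : -(2 * k) = -(l3/(ε*l2)) := by
      rw [hkdef]
      ring
    have e7 : ε⁻¹ * (-l3 * norm2 (η t)^2 + 2 * ε * (M₀ * (l2 * norm2 (η t))))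
        = -(ε⁻¹ * (l3 * norm2 (η t)^2)) + ε⁻¹ * (2 * ε * (M₀ * (l2 * norm2 (η t)))) := by
      ring
    rw [e6]
    calc ε⁻¹ * ((η t ⬝ᵥ ((shiftMat n)ᵀ * P + P * shiftMat n) *ᵥ η t)
          - 2 * (η t ⬝ᵥ P.mulVec (fun i => π i (η t 0)))
          + 2 * (ε * h t) * (η t ⬝ᵥ P.mulVec e))
        ≤ ε⁻¹ * (-l3 * norm2 (η t)^2 + 2 * ε * (M₀ * (l2 * norm2 (η t)))) := hmul
      _ = -(ε⁻¹ * (l3 * norm2 (η t)^2)) + ε⁻¹ * (2 * ε * (M₀ * (l2 * norm2 (η t)))) := e7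
      _ ≤ -((l3/(ε*l2)) * (η t ⬝ᵥ P.mulVec (η t))) + 2 * c * Real.sqrt (η t ⬝ᵥ P.mulVec (η t)) := by
          rw [e3]
          have := e4.trans_eq e5
          have h8 := e1.trans_eq e2
          linarith
      _ = -(l3/(ε*l2)) * (η t ⬝ᵥ P.mulVec (η t)) + 2 * c * Real.sqrt (η t ⬝ᵥ P.mulVec (η t)) := by
          ring
  -- derivative of V
  have hderiv : ∀ t : ℝ, 0 ≤ t → HasDerivAt (fun s => η s ⬝ᵥ P.mulVec (η s))
      (2 * (η t ⬝ᵥ P.mulVec (D t))) t := by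
    intro t ht
    exact deriv_quadratic P hBsymm η D t (hηD t ht)
  -- apply the square-root Gronwall lemma
  intro t ht
  have final := sqrt_gronwall (V := fun s => η s ⬝ᵥ P.mulVec (η s))
    (V' := fun s => 2 * (η s ⬝ᵥ P.mulVec (D s))) hkpos hcnn
    (fun s _ => hVpos _) hderiv hbound t ht
  have hck : c / k = 2 * ε * l2 ^ 2 * M₀ / (l3 * Real.sqrt l1) := by
    rw [hcdef, hkdef]
    field_simp
  have hkt : -(k * t) = -(l3 * t) / (2 * ε * l2) := by
    rw [hkdef]
    ring
  rw [hck, hkt] at final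
  exact final
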